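/- Let S be a fundamental Boolean inverse ∧-monoid and let a ∈ S. (1) If af = fa for all idempotents f ≤ \overline{φ(a)}, then a is an idempotent. (2) If a⁻¹a = aa⁻¹ and af = fa for all idempotents f ≤ σ(a), then a is an idempotent. -/

import Mathlib

universe u

/-- An inverse monoid with zero: every element `a` has a unique generalized
inverse `a⁻¹`, and `0` is an absorbing element. -/
class InverseMonoidWithZero (S : Type u) extends Monoid S, Zero S, Inv S where
  zero_mul' : ∀ a : S, 0 * a = 0
  mul_zero' : ∀ a : S, a * 0 = 0
  mul_inv_mul : ∀ a : S, a * a⁻¹ * a = a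
  inv_mul_inv : ∀ a : S, a⁻¹ * a * a⁻¹ = a⁻¹
  inv_unique : ∀ a b : S, a * b * a = a → b * a * b = b → b = a⁻¹

section BasicDefs

variable {S : Type u}

/-- The natural partial order: `a ≤ b` iff `a = e * b` for some idempotent `e`. -/
def nle [InverseMonoidWithZero S] (a b : S) : Prop :=
  ∃ e : S, e * e = e ∧ a = e * b

/-- `a` and `b` are compatible if `a * b⁻¹` and `a⁻¹ * b` are idempotents. -/
def Compat [InverseMonoidWithZero S] (a b : S) : Prop :=
  (a * b⁻¹) * (a * b⁻¹) = a * b⁻¹ ∧ (a⁻¹ * b) * (a⁻¹ * b) = a⁻¹ * b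

/-- `a` and `b` are orthogonal if `a * b⁻¹ = 0` and `a⁻¹ * b = 0`. -/
def Orth [InverseMonoidWithZero S] (a b : S) : Prop :=
  a * b⁻¹ = 0 ∧ a⁻¹ * b = 0

end BasicDefs

/-- A distributive inverse monoid: every compatible pair has a join (for the
natural partial order), recorded by `sup`, and multiplication distributes over
these binary joins. -/
class DistributiveInverseMonoid (S : Type u) extends InverseMonoidWithZero S where
  sup : S → S → S
  le_sup_left : ∀ a b : S, Compat a b → nle a (sup a b)
  le_sup_right : ∀ a b : S, Compat a b → nle b (sup a b)
  sup_le : ∀ a b c : S, Compat a b → nle a c → nle b c → nle (sup a b) c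
  mul_sup : ∀ a b c : S, Compat a b → c * sup a b = sup (c * a) (c * b)
  sup_mul : ∀ a b c : S, Compat a b → sup a b * c = sup (a * c) (b * c)

/-- A Boolean inverse monoid: a distributive inverse monoid whose idempotents
form a Boolean algebra under the natural partial order; `compl` records the
complementation on idempotents. -/
class BooleanInverseMonoid (S : Type u) extends DistributiveInverseMonoid S where
  compl : S → S
  compl_idem : ∀ e : S, e * e = e → compl e * compl e = compl e
  mul_compl : ∀ e : S, e * e = e → e * compl e = 0
  sup_compl : ∀ e : S, e * e = e → sup e (compl e) = 1

/-- A Boolean inverse ∧-monoid: a Boolean inverse monoid in which every pair of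
elements has a meet with respect to the natural partial order. -/
class BooleanInverseMeetMonoid (S : Type u) extends BooleanInverseMonoid S where
  inf : S → S → S
  inf_le_left : ∀ a b : S, nle (inf a b) a
  inf_le_right : ∀ a b : S, nle (inf a b) b
  le_inf : ∀ a b c : S, nle c a → nle c b → nle c (inf a b)

section MoreDefs

variable {S : Type u}

/-- The join of a compatible pair. -/
def bsup [DistributiveInverseMonoid S] (a b : S) : S := DistributiveInverseMonoid.sup a b

/-- Complementation in the Boolean algebra of idempotents. -/
def bcompl [BooleanInverseMonoid S] (e : S) : S := BooleanInverseMonoid.compl e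

/-- The binary meet. -/
def binf [BooleanInverseMeetMonoid S] (a b : S) : S := BooleanInverseMeetMonoid.inf a b

/-- The fixed-point operator `φ(s) = s ∧ 1`. -/
def phi [BooleanInverseMeetMonoid S] (s : S) : S := binf s 1

/-- The support operator `σ(s) = \overline{φ(s)} ⋅ s⁻¹ s`. -/
def sigma [BooleanInverseMeetMonoid S] (s : S) : S := bcompl (phi s) * (s⁻¹ * s)

/-- An infinitesimal is a non-zero element that squares to zero. -/
def Infinitesimal [InverseMonoidWithZero S] (a : S) : Prop := a ≠ 0 ∧ a * a = 0

/-- A (two-sided) ideal. -/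
def IsMIdeal [InverseMonoidWithZero S] (I : Set S) : Prop :=
  I.Nonempty ∧ ∀ a ∈ I, ∀ s : S, s * a ∈ I ∧ a * s ∈ I

/-- A ∨-ideal: an ideal closed under joins of compatible pairs. -/
def IsVIdeal [DistributiveInverseMonoid S] (I : Set S) : Prop :=
  IsMIdeal I ∧ ∀ a ∈ I, ∀ b ∈ I, Compat a b → bsup a b ∈ I

end MoreDefs

/-- 0-simplifying: the only ∨-ideals are `{0}` and `S`. -/
def ZeroSimplifying (S : Type u) [DistributiveInverseMonoid S] : Prop :=
  ∀ I : Set S, IsVIdeal I → I = {0} ∨ I = Set.univ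

/-- 0-simple: non-trivial and the only ideals are `{0}` and `S`. -/
def ZeroSimple (S : Type u) [InverseMonoidWithZero S] : Prop :=
  (∃ s : S, s ≠ 0) ∧ ∀ I : Set S, IsMIdeal I → I = {0} ∨ I = Set.univ

/-- Fundamental: every element commuting with all idempotents is an idempotent. -/
def Fundamental (S : Type u) [InverseMonoidWithZero S] : Prop :=
  ∀ a : S, (∀ e : S, e * e = e → a * e = e * a) → a * a = a

/-- The Boolean algebra of idempotents is atomless. -/
def IdemAtomless (S : Type u) [InverseMonoidWithZero S] : Prop :=
  ∀ e : S, e * e = e → e ≠ 0 → ∃ f : S, f * f = f ∧ f ≠ 0 ∧ nle f e ∧ f ≠ e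

section Filters

variable {S : Type u}

/-- A filter in a Boolean inverse ∧-monoid: a nonempty subset closed under
binary meets and upward closed in the natural partial order. -/
def IsMFilter [BooleanInverseMeetMonoid S] (A : Set S) : Prop :=
  A.Nonempty ∧ (∀ a ∈ A, ∀ b ∈ A, binf a b ∈ A) ∧ ∀ a ∈ A, ∀ b : S, nle a b → b ∈ A

/-- An ultrafilter: a maximal proper filter. -/
def IsMUltrafilter [BooleanInverseMeetMonoid S] (A : Set S) : Prop :=
  IsMFilter A ∧ (0 : S) ∉ A ∧ ∀ B : Set S, IsMFilter B → (0 : S) ∉ B → A ⊆ B → A = B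

/-- A filter of the Boolean algebra of idempotents (meet of idempotents is
their product). -/
def IsIdemFilter [InverseMonoidWithZero S] (F : Set S) : Prop :=
  F.Nonempty ∧ (∀ e ∈ F, e * e = e) ∧ (∀ e ∈ F, ∀ f ∈ F, e * f ∈ F) ∧
    ∀ e ∈ F, ∀ f : S, f * f = f → nle e f → f ∈ F

/-- An ultrafilter of the Boolean algebra of idempotents. -/
def IsIdemUltrafilter [InverseMonoidWithZero S] (F : Set S) : Prop :=
  IsIdemFilter F ∧ (0 : S) ∉ F ∧
    ∀ G : Set S, IsIdemFilter G → (0 : S) ∉ G → F ⊆ G → F = G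

end Filters

section PencilDefs

variable {S : Type u}

/-- `Preceq e f`: there is a pencil from `e` to `f`, i.e. finitely many
elements `x₁, …, xₘ` with `r(xᵢ) ≤ f` for all `i` and `e = ⋁ d(xᵢ)`
(a least upper bound for the natural partial order). -/
def Preceq [DistributiveInverseMonoid S] (e f : S) : Prop :=
  ∃ l : List S, l ≠ [] ∧ (∀ x ∈ l, nle (x * x⁻¹) f) ∧
    (∀ x ∈ l, nle (x⁻¹ * x) e) ∧ ∀ c : S, (∀ x ∈ l, nle (x⁻¹ * x) c) → nle e c

/-- Piecewise factorizable: every element is a finite join of elements each of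
which lies beneath a unit. -/
def PiecewiseFactorizable (S : Type u) [DistributiveInverseMonoid S] : Prop :=
  ∀ s : S, ∃ l : List S, l ≠ [] ∧ (∀ x ∈ l, ∃ g : S, IsUnit g ∧ nle x g) ∧
    (∀ x ∈ l, nle x s) ∧ ∀ c : S, (∀ x ∈ l, nle x c) → nle s c

/-- A properly infinite idempotent. -/
def ProperlyInfinite [DistributiveInverseMonoid S] (e : S) : Prop :=
  ∃ x y : S, x⁻¹ * x = e ∧ y⁻¹ * y = e ∧ Orth (x * x⁻¹) (y * y⁻¹) ∧
    nle (bsup (x * x⁻¹) (y * y⁻¹)) e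

end PencilDefs

/-- Purely infinite: every non-zero idempotent is properly infinite. -/
def PurelyInfinite (S : Type u) [DistributiveInverseMonoid S] : Prop :=
  ∀ e : S, e * e = e → e ≠ 0 → ProperlyInfinite e


section AuxLemmas

variable {S : Type u}

section IMZ

variable [InverseMonoidWithZero S]

open InverseMonoidWithZero in
lemma my_inv_inv (a : S) : a⁻¹⁻¹ = a :=
  (inv_unique a⁻¹ a (inv_mul_inv a) (mul_inv_mul a)).symm

open InverseMonoidWithZero in
lemma my_idem_inv {e : S} (he : e * e = e) : e⁻¹ = e :=
  (inv_unique e e (by rw [he, he]) (by rw [he, he])).symm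

open InverseMonoidWithZero in
lemma my_dd_idem (a : S) : (a * a⁻¹) * (a * a⁻¹) = a * a⁻¹ := by
  rw [← mul_assoc, mul_inv_mul]

open InverseMonoidWithZero in
lemma my_rr_idem (a : S) : (a⁻¹ * a) * (a⁻¹ * a) = a⁻¹ * a := by
  rw [← mul_assoc, inv_mul_inv]

lemma my_idem_absorb {e : S} (he : e * e = e) (y : S) : e * (e * y) = e * y := by
  rw [← mul_assoc, he]

open InverseMonoidWithZero in
lemma my_mim0 (a : S) : a * (a⁻¹ * a) = a := by
  rw [← mul_assoc, mul_inv_mul]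

open InverseMonoidWithZero in
lemma my_ef_idem {e f : S} (he : e * e = e) (hf : f * f = f) :
    (e * f) * (e * f) = e * f := by
  set x := (e * f)⁻¹ with hx
  have h1 : (e * f) * x * (e * f) = e * f := mul_inv_mul (e * f)
  have h2 : x * (e * f) * x = x := inv_mul_inv (e * f)
  have he2 : ∀ y : S, e * (e * y) = e * y := my_idem_absorb he
  have hf2 : ∀ y : S, f * (f * y) = f * y := my_idem_absorb hf
  have h2' : ∀ y : S, x * (e * (f * (x * y))) = x * y := by
    intro y
    have := congrArg (· * y) h2
    simpa [mul_assoc] using this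
  have key1 : f * x * e = x := by
    rw [hx]
    apply InverseMonoidWithZero.inv_unique
    · simp only [mul_assoc, he2, hf2]
      simpa [mul_assoc] using h1
    · simp only [mul_assoc, he2, hf2, ← hx, h2']
  have key2 : x * x = x := by
    rw [← key1]
    simp only [mul_assoc]
    rw [h2' e]
  have hef : e * f = x := by
    conv_lhs => rw [← my_inv_inv (e * f)]
    rw [← hx]
    exact my_idem_inv key2
  rw [hef]; exact key2

open InverseMonoidWithZero in
lemma my_idem_comm {e f : S} (he : e * e = e) (hf : f * f = f) :
    e * f = f * e := by
  have hef := my_ef_idem he hf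
  have hfe := my_ef_idem hf he
  have he2 : ∀ y : S, e * (e * y) = e * y := my_idem_absorb he
  have hf2 : ∀ y : S, f * (f * y) = f * y := my_idem_absorb hf
  have h1 : f * e = (e * f)⁻¹ := by
    apply InverseMonoidWithZero.inv_unique
    · simp only [mul_assoc, he2, hf2]
      simpa [mul_assoc] using hef
    · simp only [mul_assoc, he2, hf2]
      simpa [mul_assoc] using hfe
  rw [h1, my_idem_inv hef]

open InverseMonoidWithZero in
lemma my_mul_inv_rev (a b : S) : (a * b)⁻¹ = b⁻¹ * a⁻¹ := by
  symm
  have hcomm : (b * b⁻¹) * (a⁻¹ * a) = (a⁻¹ * a) * (b * b⁻¹) :=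
    my_idem_comm (my_dd_idem b) (my_rr_idem a)
  apply InverseMonoidWithZero.inv_unique
  · calc a * b * (b⁻¹ * a⁻¹) * (a * b)
        = a * ((b * b⁻¹) * (a⁻¹ * a)) * b := by simp only [mul_assoc]
      _ = a * ((a⁻¹ * a) * (b * b⁻¹)) * b := by rw [hcomm]
      _ = (a * a⁻¹ * a) * (b * b⁻¹ * b) := by simp only [mul_assoc]
      _ = a * b := by rw [mul_inv_mul, mul_inv_mul]
  · calc b⁻¹ * a⁻¹ * (a * b) * (b⁻¹ * a⁻¹)
        = b⁻¹ * ((a⁻¹ * a) * (b * b⁻¹)) * a⁻¹ := by simp only [mul_assoc]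
      _ = b⁻¹ * ((b * b⁻¹) * (a⁻¹ * a)) * a⁻¹ := by rw [hcomm]
      _ = (b⁻¹ * b * b⁻¹) * (a⁻¹ * a * a⁻¹) := by simp only [mul_assoc]
      _ = b⁻¹ * a⁻¹ := by rw [inv_mul_inv, inv_mul_inv]

lemma my_compat_idem {e f : S} (he : e * e = e) (hf : f * f = f) :
    Compat e f := by
  constructor
  · rw [my_idem_inv hf]; exact my_ef_idem he hf
  · rw [my_idem_inv he]; exact my_ef_idem he hf

open InverseMonoidWithZero in
lemma my_nle_idem_absorb {e a : S} (he : e * e = e) (h : nle e a) :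
    a * e = e ∧ e * a = e := by
  obtain ⟨g, hg, heg⟩ := h
  have hcomm : (a * a⁻¹) * g = g * (a * a⁻¹) := my_idem_comm (my_dd_idem a) hg
  have hi : e * (a⁻¹ * e) = e := by
    conv_lhs => rw [heg]
    calc g * a * (a⁻¹ * (g * a))
        = g * (((a * a⁻¹) * g) * a) := by simp only [mul_assoc]
      _ = g * ((g * (a * a⁻¹)) * a) := by rw [hcomm]
      _ = g * (g * (a * (a⁻¹ * a))) := by simp only [mul_assoc]
      _ = g * (g * a) := by rw [my_mim0]
      _ = g * a := my_idem_absorb hg a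
      _ = e := heg.symm
  have hii : (e * a⁻¹) * (e * a⁻¹) = e * a⁻¹ := by
    calc (e * a⁻¹) * (e * a⁻¹) = (e * (a⁻¹ * e)) * a⁻¹ := by simp only [mul_assoc]
      _ = e * a⁻¹ := by rw [hi]
  have c2 : (e * a⁻¹) * e = e := by rw [mul_assoc]; exact hi
  have hEA : e * a⁻¹ = e := by
    have c1 : e * (e * a⁻¹) = e * a⁻¹ := my_idem_absorb he a⁻¹
    rw [← c1, my_idem_comm he hii, c2]
  have hEAa : e * a = e := by
    conv_lhs => rw [← hEA]
    rw [mul_assoc, heg, mul_assoc, my_mim0]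
  constructor
  · have h3 : (e * a⁻¹)⁻¹ = e⁻¹ := by rw [hEA]
    rw [my_mul_inv_rev, my_inv_inv, my_idem_inv he] at h3
    exact h3
  · exact hEAa

end IMZ

open InverseMonoidWithZero DistributiveInverseMonoid in
lemma my_comm_of_split [DistributiveInverseMonoid S] {a u v f : S}
    (hu : u * u = u) (hv : v * v = v) (hf : f * f = f)
    (hsup : DistributiveInverseMonoid.sup u v = 1)
    (h1 : a * (f * u) = (f * u) * a) (h2 : a * (f * v) = (f * v) * a) :
    a * f = f * a := by
  have hfu : (f * u) * (f * u) = f * u := my_ef_idem hf hu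
  have hfv : (f * v) * (f * v) = f * v := my_ef_idem hf hv
  have hc : Compat (f * u) (f * v) := my_compat_idem hfu hfv
  have hcuv : Compat u v := my_compat_idem hu hv
  have hsplit : f = DistributiveInverseMonoid.sup (f * u) (f * v) := by
    rw [← DistributiveInverseMonoid.mul_sup u v f hcuv, hsup, mul_one]
  calc a * f = a * DistributiveInverseMonoid.sup (f * u) (f * v) := by rw [← hsplit]
    _ = DistributiveInverseMonoid.sup (a * (f * u)) (a * (f * v)) :=
        DistributiveInverseMonoid.mul_sup _ _ _ hc
    _ = DistributiveInverseMonoid.sup ((f * u) * a) ((f * v) * a) := by rw [h1, h2]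
    _ = DistributiveInverseMonoid.sup (f * u) (f * v) * a :=
        (DistributiveInverseMonoid.sup_mul _ _ _ hc).symm
    _ = f * a := by rw [← hsplit]

end AuxLemmas

/-- Let `S` be a fundamental Boolean inverse ∧-monoid and `a ∈ S`.
(1) If `af = fa` for all idempotents `f ≤ \overline{φ(a)}` then `a` is an idempotent.
(2) If `a⁻¹a = aa⁻¹` and `af = fa` for all idempotents `f ≤ σ(a)` then `a` is an
idempotent. -/
theorem statement15 (S : Type u) [BooleanInverseMeetMonoid S]
    (hf : Fundamental S) (a : S) :
    ((∀ f : S, f * f = f → nle f (bcompl (phi a)) → a * f = f * a) → a * a = a) ∧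
    ((a⁻¹ * a = a * a⁻¹ ∧ ∀ f : S, f * f = f → nle f (sigma a) → a * f = f * a) →
      a * a = a) := by
  have hP1 : nle (phi a) 1 := BooleanInverseMeetMonoid.inf_le_right a 1
  have hPa : nle (phi a) a := BooleanInverseMeetMonoid.inf_le_left a 1
  obtain ⟨e0, he0, hpe0⟩ := hP1
  have hPid : (phi a) * (phi a) = phi a := by rw [hpe0, mul_one]; exact he0
  have hP'id : bcompl (phi a) * bcompl (phi a) = bcompl (phi a) :=
    BooleanInverseMonoid.compl_idem _ hPid
  have hsupP : DistributiveInverseMonoid.sup (phi a) (bcompl (phi a)) = 1 :=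
    BooleanInverseMonoid.sup_compl _ hPid
  obtain ⟨g, hg, hPg⟩ := hPa
  -- a commutes with f * phi a for any idempotent f
  have hcommP : ∀ f : S, f * f = f → a * (f * phi a) = (f * phi a) * a := by
    intro f hfidem
    have hidem : (f * phi a) * (f * phi a) = f * phi a := my_ef_idem hfidem hPid
    have hnle : nle (f * phi a) a := ⟨f * g, my_ef_idem hfidem hg, by
      rw [mul_assoc, ← hPg]⟩
    obtain ⟨h1, h2⟩ := my_nle_idem_absorb hidem hnle
    rw [h1, h2]
  constructor
  · intro hcomm
    apply hf
    intro f hfidem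
    refine my_comm_of_split hPid hP'id hfidem hsupP (hcommP f hfidem) ?_
    exact hcomm (f * bcompl (phi a)) (my_ef_idem hfidem hP'id) ⟨f, hfidem, rfl⟩
  · rintro ⟨hnorm, hcomm⟩
    apply hf
    intro f hfidem
    refine my_comm_of_split hPid hP'id hfidem hsupP (hcommP f hfidem) ?_
    -- show a commutes with q := f * bcompl (phi a) by splitting along a⁻¹*a
    set q := f * bcompl (phi a) with hq
    have hqid : q * q = q := my_ef_idem hfidem hP'id
    have hdid : (a⁻¹ * a) * (a⁻¹ * a) = a⁻¹ * a := my_rr_idem a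
    have hcid : bcompl (a⁻¹ * a) * bcompl (a⁻¹ * a) = bcompl (a⁻¹ * a) :=
      BooleanInverseMonoid.compl_idem _ hdid
    have hsupd : DistributiveInverseMonoid.sup (a⁻¹ * a) (bcompl (a⁻¹ * a)) = 1 :=
      BooleanInverseMonoid.sup_compl _ hdid
    have hdc : (a⁻¹ * a) * bcompl (a⁻¹ * a) = 0 :=
      BooleanInverseMonoid.mul_compl _ hdid
    refine my_comm_of_split hdid hcid hqid hsupd ?_ ?_
    · -- q * (a⁻¹ * a) ≤ sigma a, use hypothesis
      have hidem : (q * (a⁻¹ * a)) * (q * (a⁻¹ * a)) = q * (a⁻¹ * a) :=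
        my_ef_idem hqid hdid
      refine hcomm (q * (a⁻¹ * a)) hidem ⟨f, hfidem, ?_⟩
      show q * (a⁻¹ * a) = f * sigma a
      rw [hq, sigma, mul_assoc]
    · -- both sides are zero
      have hzero : (a⁻¹ * a) * (q * bcompl (a⁻¹ * a)) = 0 := by
        rw [← mul_assoc, my_idem_comm hdid hqid, mul_assoc, hdc,
          InverseMonoidWithZero.mul_zero']
      have hL : a * (q * bcompl (a⁻¹ * a)) = 0 := by
        have h' : a * (q * bcompl (a⁻¹ * a))
            = (a * (a⁻¹ * a)) * (q * bcompl (a⁻¹ * a)) := by rw [my_mim0]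
        rw [h', mul_assoc, hzero, InverseMonoidWithZero.mul_zero']
      have hcd : bcompl (a⁻¹ * a) * (a⁻¹ * a) = 0 := by
        rw [my_idem_comm hcid hdid, hdc]
      have haa : (a⁻¹ * a) * a = a := by
        rw [hnorm, InverseMonoidWithZero.mul_inv_mul]
      have hR : (q * bcompl (a⁻¹ * a)) * a = 0 := by
        have h' : (q * bcompl (a⁻¹ * a)) * a
            = (q * bcompl (a⁻¹ * a)) * ((a⁻¹ * a) * a) := by rw [haa]
        rw [h', ← mul_assoc, mul_assoc q, hcd, InverseMonoidWithZero.mul_zero',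
          InverseMonoidWithZero.zero_mul']
      rw [hL, hR]
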